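/- There is no solution $u:(\hat{x}, x_*)\to(0,\infty)$ of $\frac{u''}{1+u'^2} = -\frac{2}{u} - \frac{2u'}{u^2}$ with $x_* - \hat{x} < 1$, $u' < 0$ on $(\hat{x}, x_*)$, and $u(x)\to 0$ as $x \to x_*^-$ with $u'$ remaining bounded (i.e., $\lim_{x\to x_*^-} u'(x)$ exists and is finite). -/

import Mathlib

open Set Filter

/-- A strictly decreasing positive solution of `u''/(1+u'^2) = -2/u - 2u'/u²` on an interval of
length less than `1` cannot reach height zero at the right endpoint with bounded slope. -/
theorem stmt10 (xh xs : ℝ) (hlt : xh < xs) (hlen : xs - xh < 1) (u : ℝ → ℝ)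
    (hpos : ∀ x ∈ Ioo xh xs, 0 < u x)
    (hdiff : ∀ x ∈ Ioo xh xs, DifferentiableAt ℝ u x)
    (hdiff' : ∀ x ∈ Ioo xh xs, DifferentiableAt ℝ (deriv u) x)
    (hode : ∀ x ∈ Ioo xh xs,
      deriv (deriv u) x / (1 + (deriv u x) ^ 2) = -2 / u x - 2 * deriv u x / (u x) ^ 2)
    (hdec : ∀ x ∈ Ioo xh xs, deriv u x < 0)
    (hlim : Tendsto u (nhdsWithin xs (Iio xs)) (nhds 0))
    (L : ℝ) (hslope : Tendsto (deriv u) (nhdsWithin xs (Iio xs)) (nhds L)) :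
    False := by
  set x0 : ℝ := (xh + xs) / 2 with hx0def
  have hx0 : x0 ∈ Ioo xh xs := ⟨by simp only [hx0def]; linarith, by simp only [hx0def]; linarith⟩
  set ε : ℝ := 1 - (xs - x0) with hεdef
  have hε : 0 < ε := by simp only [hεdef, hx0def]; linarith
  set C : ℝ := Real.arctan (deriv u x0) - 2 / u x0 with hCdef
  -- u is strictly decreasing on Ioo xh xs
  have hanti : StrictAntiOn u (Ioo xh xs) := by
    apply strictAntiOn_of_deriv_neg (convex_Ioo _ _)
    · exact fun t ht => (hdiff t ht).continuousAt.continuousWithinAt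
    · rw [interior_Ioo]; exact hdec
  -- the key derivative identity: F = arctan (u') - 2/u has F' = -2/u on Ioo xh xs
  have hF : ∀ t ∈ Ioo xh xs,
      HasDerivAt (fun s => Real.arctan (deriv u s) - 2 / u s) (-2 / u t) t := by
    intro t ht
    have hu : u t ≠ 0 := (hpos t ht).ne'
    have h1 : HasDerivAt (fun s => Real.arctan (deriv u s))
        (1 / (1 + deriv u t ^ 2) * deriv (deriv u) t) t :=
      ((hdiff' t ht).hasDerivAt).arctan
    have h2 : HasDerivAt (fun s => (2 : ℝ) / u s)
        ((0 * u t - 2 * deriv u t) / u t ^ 2) t :=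
      (hasDerivAt_const t (2 : ℝ)).div ((hdiff t ht).hasDerivAt) hu
    have h3 := h1.sub h2
    refine h3.congr_deriv ?_
    have hq : 1 / (1 + deriv u t ^ 2) * deriv (deriv u) t
        = deriv (deriv u) t / (1 + deriv u t ^ 2) := by ring
    rw [hq, hode t ht]
    field_simp
    ring
  -- key inequality
  have key : ∀ y ∈ Ioo x0 xs, C + 2 / u y * (1 - (y - x0)) ≤ Real.arctan (deriv u y) := by
    intro y hy
    have hyI : y ∈ Ioo xh xs := ⟨lt_trans hx0.1 hy.1, hy.2⟩
    have huy : 0 < u y := hpos y hyI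
    set φ : ℝ → ℝ := fun s => Real.arctan (deriv u s) - 2 / u s + 2 / u y * s with hφdef
    have hsub : Icc x0 y ⊆ Ioo xh xs := fun t ht =>
      ⟨lt_of_lt_of_le hx0.1 ht.1, lt_of_le_of_lt ht.2 hy.2⟩
    have hφd : ∀ t ∈ Ioo xh xs, HasDerivAt φ (-2 / u t + 2 / u y) t := by
      intro t ht
      have hlin : HasDerivAt (fun s => 2 / u y * s) (2 / u y) t := by
        simpa using (hasDerivAt_id t).const_mul (2 / u y)
      exact (hF t ht).add hlin
    have hmono : MonotoneOn φ (Icc x0 y) := by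
      apply monotoneOn_of_deriv_nonneg (convex_Icc _ _)
      · exact fun t ht => (hφd t (hsub ht)).differentiableAt.continuousAt.continuousWithinAt
      · rw [interior_Icc]
        intro t ht
        exact ((hφd t (hsub (Ioo_subset_Icc_self ht))).differentiableAt).differentiableWithinAt
      · rw [interior_Icc]
        intro t ht
        have htI : t ∈ Ioo xh xs := hsub (Ioo_subset_Icc_self ht)
        rw [(hφd t htI).deriv]
        have hut : 0 < u t := hpos t htI
        have hle : u y ≤ u t := le_of_lt (hanti htI hyI ht.2)
        have h5 : 2 / u t ≤ 2 / u y := by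
          apply div_le_div_of_nonneg_left (by norm_num) huy hle
        have h6 : -2 / u t = -(2 / u t) := by ring
        linarith
    have h0 := hmono (left_mem_Icc.2 (le_of_lt hy.1)) (right_mem_Icc.2 (le_of_lt hy.1))
        (le_of_lt hy.1)
    simp only [hφdef] at h0
    have hexp : 2 / u y * (1 - (y - x0)) = 2 / u y - 2 / u y * y + 2 / u y * x0 := by ring
    rw [hCdef, hexp]
    linarith
  -- C < π/2
  have hCpi : C < Real.pi / 2 := by
    have h1 : Real.arctan (deriv u x0) < Real.pi / 2 := Real.arctan_lt_pi_div_two _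
    have h2 : 0 < 2 / u x0 := div_pos (by norm_num) (hpos x0 hx0)
    simp only [hCdef]; linarith
  set δ : ℝ := 2 * ε / (Real.pi / 2 - C) with hδdef
  have hδ : 0 < δ := div_pos (by positivity) (by linarith)
  have hlb : ∀ y ∈ Ioo x0 xs, δ ≤ u y := by
    intro y hy
    have hyI : y ∈ Ioo xh xs := ⟨lt_trans hx0.1 hy.1, hy.2⟩
    have huy : 0 < u y := hpos y hyI
    have h1 := key y hy
    have h2 : Real.arctan (deriv u y) < Real.pi / 2 := Real.arctan_lt_pi_div_two _
    have hεle : ε ≤ 1 - (y - x0) := by simp only [hεdef]; linarith [hy.2]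
    have h3 : 2 / u y * ε ≤ 2 / u y * (1 - (y - x0)) :=
      mul_le_mul_of_nonneg_left hεle (le_of_lt (div_pos (by norm_num) huy))
    have h4 : 2 / u y * ε < Real.pi / 2 - C := by linarith
    -- so 2ε < (π/2 - C) * u y, i.e. δ ≤ u y
    rw [div_mul_eq_mul_div, div_lt_iff₀ huy] at h4
    rw [hδdef, div_le_iff₀ (by linarith : (0:ℝ) < Real.pi / 2 - C)]
    nlinarith
  -- contradiction with hlim
  have hne : (nhdsWithin xs (Iio xs)).NeBot := nhdsLT_neBot xs
  have hev1 : ∀ᶠ y in nhdsWithin xs (Iio xs), u y < δ :=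
    (hlim.eventually (tendsto_id.eventually_lt_const hδ)).mono (fun y hy => hy)
  have hev2 : ∀ᶠ y in nhdsWithin xs (Iio xs), y ∈ Ioo x0 xs := by
    have h := inter_mem_nhdsWithin (Iio xs) (Ioi_mem_nhds hx0.2)
    rwa [inter_comm, Ioi_inter_Iio] at h
  obtain ⟨y, hy1, hy2⟩ := (hev1.and hev2).exists
  exact absurd (hlb y hy2) (not_le.2 hy1)
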